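/- Let G be a graph on n vertices in which every k-subset of vertices is an identifying set, and let 1 ≤ s ≤ n. If S is a uniformly random s-subset of V, then the probability that S is identifying is at least 1 − C(n+1, 2) · C(k−1, s) / C(n, s). -/

import Mathlib

open Set

variable {V : Type*}

/-- The closed neighbourhood `N[x]` of a vertex. -/
def closedNbhd (G : SimpleGraph V) (x : V) : Set V :=
  insert x (G.neighborSet x)

/-- `C` is an identifying set: all sets `N[x] ∩ C` are nonempty and pairwise distinct. -/
def IsIdentifying (G : SimpleGraph V) (C : Set V) : Prop :=
  (∀ x : V, (closedNbhd G x ∩ C).Nonempty) ∧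
    ∀ x y : V, closedNbhd G x ∩ C = closedNbhd G y ∩ C → x = y

/-- Every `k`-subset of vertices is an identifying set. -/
def EveryKIdentifying (G : SimpleGraph V) (k : ℕ) : Prop :=
  ∀ C : Set V, C.ncard = k → IsIdentifying G C

open Classical in
noncomputable def Df [Fintype V] (G : SimpleGraph V) (e : Sym2 V) : Finset V :=
  Sym2.lift ⟨fun x y => if x = y then (closedNbhd G x).toFinset
      else (symmDiff (closedNbhd G x) (closedNbhd G y)).toFinset, by
    intro x y
    rcases eq_or_ne x y with rfl | hxy
    · simp
    · simp only [if_neg hxy, if_neg hxy.symm, symmDiff_comm]⟩ e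

theorem stmt14 [Fintype V] (G : SimpleGraph V) (n k s : ℕ)
    (hn : Fintype.card V = n) (h : EveryKIdentifying G k)
    (hs1 : 1 ≤ s) (hsn : s ≤ n) :
    (1 : ℝ) - ((n + 1).choose 2 : ℝ) * ((k - 1).choose s : ℝ) / (n.choose s : ℝ) ≤
      (Nat.card {S : Set V // S.ncard = s ∧ IsIdentifying G S} : ℝ) / (n.choose s : ℝ) := by
  classical
  -- small card of complements
  have hD : ∀ e : Sym2 V, ((Df G e)ᶜ).card ≤ k - 1 := by
    intro e
    induction e using Sym2.ind with
    | _ x y =>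
      by_contra hc
      push_neg at hc
      have hk : k ≤ ((Df G (Sym2.mk x y))ᶜ).card := by omega
      obtain ⟨T, hTsub, hTcard⟩ := Finset.exists_subset_card_eq hk
      have hTid : IsIdentifying G ↑T := h ↑T (by simp [Set.ncard_coe_finset, hTcard])
      rcases eq_or_ne x y with rfl | hxy
      · -- nonempty condition fails
        have hDx : Df G (Sym2.mk x x) = (closedNbhd G x).toFinset := by
          simp [Df]
        obtain ⟨v, hv⟩ := hTid.1 x
        have hvT : v ∈ T := hv.2
        have := hTsub hvT
        rw [hDx, Finset.mem_compl, Set.mem_toFinset] at this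
        exact this hv.1
      · -- distinguishing condition fails
        have hDxy : Df G (Sym2.mk x y) = (symmDiff (closedNbhd G x) (closedNbhd G y)).toFinset := by
          simp [Df, hxy]
        apply hxy
        apply hTid.2
        ext v
        simp only [Set.mem_inter_iff]
        constructor
        · rintro ⟨hvx, hvT⟩
          refine ⟨?_, hvT⟩
          by_contra hvy
          have := hTsub (by simpa using hvT)
          rw [hDxy, Finset.mem_compl, Set.mem_toFinset] at this
          exact this (Or.inl ⟨hvx, hvy⟩)
        · rintro ⟨hvy, hvT⟩
          refine ⟨?_, hvT⟩
          by_contra hvx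
          have := hTsub (by simpa using hvT)
          rw [hDxy, Finset.mem_compl, Set.mem_toFinset] at this
          exact this (Or.inr ⟨hvy, hvx⟩)
  -- bad sets are covered
  have hcover : ∀ S : Finset V, ¬ IsIdentifying G ↑S → ∃ e : Sym2 V, S ⊆ (Df G e)ᶜ := by
    intro S hS
    rw [IsIdentifying, not_and_or] at hS
    rcases hS with hS | hS
    · push_neg at hS
      obtain ⟨x, hx⟩ := hS
      refine ⟨Sym2.mk x x, fun v hv => ?_⟩
      rw [Finset.mem_compl]
      intro hvD
      have hDx : Df G (Sym2.mk x x) = (closedNbhd G x).toFinset := by simp [Df]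
      rw [hDx, Set.mem_toFinset] at hvD
      have : v ∈ closedNbhd G x ∩ ↑S := ⟨hvD, hv⟩
      rw [hx] at this
      exact this
    · push_neg at hS
      obtain ⟨x, y, hxy, hne⟩ := hS
      have hxyne : x ≠ y := hne
      refine ⟨Sym2.mk x y, fun v hv => ?_⟩
      rw [Finset.mem_compl]
      intro hvD
      have hDxy : Df G (Sym2.mk x y) = (symmDiff (closedNbhd G x) (closedNbhd G y)).toFinset := by
        simp [Df, hxyne]
      rw [hDxy, Set.mem_toFinset] at hvD
      rcases hvD with ⟨hvx, hvy⟩ | ⟨hvy, hvx⟩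
      · have : v ∈ closedNbhd G y ∩ ↑S := by rw [← hxy]; exact ⟨hvx, hv⟩
        exact hvy this.1
      · have : v ∈ closedNbhd G x ∩ ↑S := by rw [hxy]; exact ⟨hvy, hv⟩
        exact hvx this.1
  -- counting
  set P := (Finset.univ : Finset V).powersetCard s with hP
  set Good := P.filter (fun S : Finset V => IsIdentifying G (S : Set V)) with hGood
  set Bad := P.filter (fun S : Finset V => ¬ IsIdentifying G (S : Set V)) with hBad
  have hsplit : Good.card + Bad.card = n.choose s := by
    rw [hGood, hBad, Finset.card_filter_add_card_filter_not]
    rw [hP, Finset.card_powersetCard, Finset.card_univ, hn]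
  have hBadle : Bad.card ≤ (n + 1).choose 2 * (k - 1).choose s := by
    have hsub : Bad ⊆ Finset.univ.biUnion (fun e : Sym2 V => ((Df G e)ᶜ).powersetCard s) := by
      intro S hS
      rw [hBad, Finset.mem_filter] at hS
      obtain ⟨e, he⟩ := hcover S hS.2
      rw [Finset.mem_biUnion]
      refine ⟨e, Finset.mem_univ _, ?_⟩
      rw [Finset.mem_powersetCard]
      refine ⟨he, ?_⟩
      have := hS.1
      rw [hP, Finset.mem_powersetCard_univ] at this
      exact this
    calc Bad.card ≤ _ := Finset.card_le_card hsub
      _ ≤ ∑ e : Sym2 V, (((Df G e)ᶜ).powersetCard s).card := Finset.card_biUnion_le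
      _ ≤ ∑ _e : Sym2 V, (k - 1).choose s := by
          apply Finset.sum_le_sum
          intro e _
          rw [Finset.card_powersetCard]
          exact Nat.choose_le_choose s (hD e)
      _ = (n + 1).choose 2 * (k - 1).choose s := by
          rw [Finset.sum_const, Finset.card_univ, Sym2.card, hn, smul_eq_mul]
  -- relate Nat.card of the subtype to Good.card
  have hNat : Nat.card {S : Set V // S.ncard = s ∧ IsIdentifying G S} = Good.card := by
    have e : {S : Set V // S.ncard = s ∧ IsIdentifying G S} ≃ {T : Finset V // T ∈ Good} := by
      refine ⟨fun S => ⟨S.1.toFinset, ?_⟩, fun T => ⟨(T.1 : Set V), ?_⟩, ?_, ?_⟩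
      · rw [hGood, Finset.mem_filter, hP, Finset.mem_powersetCard_univ]
        refine ⟨by rw [← Set.ncard_eq_toFinset_card']; exact S.2.1, ?_⟩
        rw [Set.coe_toFinset]; exact S.2.2
      · have hT : (T : Finset V).card = s ∧ IsIdentifying G ((T : Finset V) : Set V) := by
          obtain ⟨h3, h4⟩ := Finset.mem_filter.mp T.2
          exact ⟨Finset.mem_powersetCard_univ.mp h3, h4⟩
        exact ⟨by rw [Set.ncard_coe_finset]; exact hT.1, hT.2⟩
      · intro S; apply Subtype.ext; simp
      · intro T; apply Subtype.ext; simp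
    rw [Nat.card_congr e, Nat.card_eq_fintype_card, Fintype.card_coe]
  -- final arithmetic
  have hB : (0 : ℝ) < (n.choose s : ℝ) := by
    exact_mod_cast Nat.choose_pos hsn
  rw [sub_le_iff_le_add, ← add_div, le_div_iff₀ hB, one_mul]
  rw [hNat]
  have : n.choose s ≤ Good.card + (n + 1).choose 2 * (k - 1).choose s := by omega
  exact_mod_cast this
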